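/- Let ℓ ≥ 1, γ ∈ (0,1), ε ≥ 0 and z ∈ {0,1}^ℓ. The total variation distance between the output distributions G_z({s1}, λ) and G_z(∅, λ) of the rollout of M_z on the empty prompt λ is at most 2^{−ℓ}. -/

import Mathlib

open scoped ENNReal Classical

noncomputable section

namespace CCA

variable {α X D Y : Type*}

/-- Coin flip: `true` with probability `min p 1`. -/
def coin (p : ℝ≥0∞) : PMF Bool := PMF.bernoulli (min p 1).toNNReal
  (by simpa using ENNReal.toNNReal_mono ENNReal.one_ne_top (min_le_right p 1))

/-- Two-point distribution: `x` with probability `p` (clipped at `1`), else `y`. -/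
def twoPoint (p : ℝ≥0∞) (x y : α) : PMF α := PMF.map (fun b => if b then x else y) (coin p)

/-- Probability that the (plain) rollout of `M` on current prompt `x` produces the
trace of tokens `w`. -/
def pTraceProb (M : Set D → List X → PMF X) (S : Set D) : List X → List X → ℝ≥0∞
  | _, [] => 1
  | x, y :: w => M S x y * pTraceProb M S (x ++ [y]) w

/-- A terminal token trace: the last token is `bot` and no earlier token is `bot`. -/
def pIsTerminal (bot : X) (w : List X) : Prop :=
  w.getLast? = some bot ∧ ∀ y ∈ w.dropLast, y ≠ bot

/-- Probability that the rollout of `M` on `(S, x0)` outputs the string `o`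
(which includes the final `bot`). -/
def pRolloutProb (bot : X) (M : Set D → List X → PMF X) (S : Set D) (x0 : List X)
    (o : List X) : ℝ≥0∞ :=
  ∑' w : {w : List X // pIsTerminal bot w ∧ x0 ++ w = o}, pTraceProb M S x0 w.1

/-- Event kernel of the rollout of `M`. -/
def pRolloutK (bot : X) (M : Set D → List X → PMF X) :
    Set D → List X → Set (List X) → ℝ≥0∞ :=
  fun S x0 E => ∑' o : E, pRolloutProb bot M S x0 ↑o

/-- The hard-family next-token predictor `M_z`. Tokens are `Option Bool`, where `some b` is
the bit `b` and `none` is the end token `⊥`; the data universe is `Unit = {s1}`. -/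
def Mz (ℓ : ℕ) (γ ε : ℝ) (z : List Bool) (S : Set Unit) (x : List (Option Bool)) :
    PMF (Option Bool) :=
  if ∃ bs : List Bool, x = bs.map some ∧ bs.length ≤ ℓ then
    if S ≠ ∅ ∧ x = z.map some then
      PMF.map some (coin (ENNReal.ofReal (1 / 2 + (1 - Real.exp (-ε) * (1 - γ)) / 2)))
    else PMF.map some (coin (1 / 2))
  else PMF.pure none

section Aux

open Function

private lemma map_some_apply_some (p : PMF Bool) (b : Bool) :
    (PMF.map some p) (some b) = p b := by
  rw [PMF.map_apply, tsum_eq_single b]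
  · simp
  · intro b' hb'
    simp [Option.some.injEq, Ne.symm hb']

private lemma coin_half_apply (b : Bool) : coin (1 / 2 : ℝ≥0∞) b = 1 / 2 := by
  have hmin : min (1 / 2 : ℝ≥0∞) 1 = 1 / 2 := by
    apply min_eq_left
    rw [ENNReal.div_le_iff (by norm_num) (by norm_num)]
    norm_num
  cases b <;>
    simp [coin, PMF.bernoulli_apply, hmin, one_div, ENNReal.one_sub_inv_two,
      ENNReal.toNNReal_ofNat, ENNReal.coe_inv_two]

private lemma Mz_eq_half (ℓ : ℕ) (γ ε : ℝ) (z : List Bool) (S : Set Unit)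
    (bs : List Bool) (hb : bs.length ≤ ℓ) (hne : bs.map some ≠ z.map some) :
    Mz ℓ γ ε z S (bs.map some) = PMF.map some (coin (1 / 2)) := by
  unfold Mz
  rw [if_pos ⟨bs, rfl, hb⟩, if_neg (fun hc => hne hc.2)]

private lemma Mz_indep (ℓ : ℕ) (γ ε : ℝ) (z : List Bool) (S S' : Set Unit)
    (x : List (Option Bool)) (hx : x ≠ z.map some) :
    Mz ℓ γ ε z S x = Mz ℓ γ ε z S' x := by
  unfold Mz
  by_cases h : ∃ bs : List Bool, x = bs.map some ∧ bs.length ≤ ℓ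
  · rw [if_pos h, if_pos h, if_neg (fun hc => hx hc.2), if_neg (fun hc => hx hc.2)]
  · rw [if_neg h, if_neg h]

private lemma pTraceProb_indep (ℓ : ℕ) (γ ε : ℝ) (z : List Bool) (S S' : Set Unit) :
    ∀ (w x : List (Option Bool)),
      (∀ p : List (Option Bool), p <+: w → p.length < w.length → x ++ p ≠ z.map some) →
      pTraceProb (Mz ℓ γ ε z) S x w = pTraceProb (Mz ℓ γ ε z) S' x w
  | [], _, _ => rfl
  | y :: w, x, h => by
    have hx : x ≠ z.map some := by
      simpa using h [] List.nil_prefix (by simp)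
    show Mz ℓ γ ε z S x y * pTraceProb (Mz ℓ γ ε z) S (x ++ [y]) w = _
    rw [Mz_indep ℓ γ ε z S S' x hx,
      pTraceProb_indep ℓ γ ε z S S' w (x ++ [y]) ?_]
    · rfl
    · intro p hp hlen
      have := h (y :: p) (List.cons_prefix_cons.mpr ⟨rfl, hp⟩)
        (by simpa using Nat.succ_lt_succ hlen)
      rw [List.append_cons x y p] at this
      exact this

private lemma pTraceProb_append (M : Set Unit → List (Option Bool) → PMF (Option Bool))
    (S : Set Unit) :
    ∀ (u x v : List (Option Bool)),
      pTraceProb M S x (u ++ v) = pTraceProb M S x u * pTraceProb M S (x ++ u) v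
  | [], x, v => by
    show pTraceProb M S x v = 1 * pTraceProb M S (x ++ []) v
    rw [one_mul, List.append_nil]
  | y :: u, x, v => by
    show M S x y * pTraceProb M S (x ++ [y]) (u ++ v)
        = M S x y * pTraceProb M S (x ++ [y]) u * pTraceProb M S (x ++ (y :: u)) v
    rw [pTraceProb_append M S u (x ++ [y]) v, List.append_cons x y u, mul_assoc]

private lemma pTraceProb_bits (ℓ : ℕ) (γ ε : ℝ) (z : List Bool) (hz : z.length = ℓ)
    (S : Set Unit) :
    ∀ (v u : List Bool), u ++ v = z →
      pTraceProb (Mz ℓ γ ε z) S (u.map some) (v.map some) = (1 / 2 : ℝ≥0∞) ^ v.length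
  | [], _, _ => by
    show (1 : ℝ≥0∞) = (1 / 2 : ℝ≥0∞) ^ List.length ([] : List Bool)
    simp
  | b :: v, u, h => by
    have hlen : u.length < ℓ := by
      have := congrArg List.length h
      simp at this
      omega
    have hne : u.map some ≠ z.map some := by
      intro hc
      have := congrArg List.length hc
      simp at this
      omega
    have step := Mz_eq_half ℓ γ ε z S u hlen.le hne
    have h1 : pTraceProb (Mz ℓ γ ε z) S (u.map some) ((b :: v).map some)
        = (1 / 2 : ℝ≥0∞) * pTraceProb (Mz ℓ γ ε z) S ((u ++ [b]).map some) (v.map some) := by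
      show Mz ℓ γ ε z S (u.map some) (some b)
          * pTraceProb (Mz ℓ γ ε z) S (u.map some ++ [some b]) (v.map some) = _
      rw [step, map_some_apply_some, coin_half_apply,
        show u.map some ++ [some b] = (u ++ [b]).map some by simp]
    rw [h1, pTraceProb_bits ℓ γ ε z hz S v (u ++ [b]) (by simpa [List.append_assoc] using h)]
    rw [List.length_cons, pow_succ, mul_comm]

private lemma not_terminal_nil : ¬ pIsTerminal (none : Option Bool) [] := by
  simp [pIsTerminal]

private lemma terminal_single (y : Option Bool) :
    pIsTerminal (none : Option Bool) [y] ↔ y = none := by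
  simp [pIsTerminal]

private lemma terminal_cons (y : Option Bool) (w : List (Option Bool)) (hw : w ≠ []) :
    pIsTerminal (none : Option Bool) (y :: w) ↔ y ≠ none ∧ pIsTerminal none w := by
  obtain ⟨a, t, rfl⟩ := List.exists_cons_of_ne_nil hw
  simp only [pIsTerminal, List.getLast?_cons_cons, List.dropLast_cons₂, List.mem_cons]
  constructor
  · rintro ⟨h1, h2⟩
    exact ⟨h2 y (Or.inl rfl), h1, fun u hu => h2 u (Or.inr hu)⟩
  · rintro ⟨hy, h1, h2⟩
    refine ⟨h1, fun u hu => ?_⟩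
    rcases hu with rfl | hu
    · exact hy
    · exact h2 u hu

private lemma terminal_append (u : List Bool) (t : List (Option Bool)) :
    pIsTerminal (none : Option Bool) (u.map some ++ t) ↔ pIsTerminal none t := by
  induction u with
  | nil => simp
  | cons a u ih =>
    by_cases ht : u.map some ++ t = []
    · rcases List.append_eq_nil_iff.mp ht with ⟨hu, ht'⟩
      subst ht'
      show pIsTerminal none ((a :: u).map some ++ []) ↔ _
      rw [List.append_nil]
      have hu' : u = [] := by simpa using hu
      subst hu'
      simp [terminal_single, not_terminal_nil]
    · show pIsTerminal none (some a :: (u.map some ++ t)) ↔ _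
      rw [terminal_cons _ _ ht, ih]
      simp

private def listConsE : Option ((Option Bool) × List (Option Bool)) ≃ List (Option Bool) where
  toFun o := match o with | none => [] | some (y, w) => y :: w
  invFun l := match l with | [] => none | y :: w => some (y, w)
  left_inv := by rintro (_ | ⟨y, w⟩) <;> rfl
  right_inv := by rintro (_ | ⟨y, w⟩) <;> rfl

private lemma tsum_list_cons (g : List (Option Bool) → ℝ≥0∞) (h0 : g [] = 0) :
    ∑' w, g w = ∑' (y : Option Bool) (w : List (Option Bool)), g (y :: w) := by
  calc ∑' w, g w
      = ∑' p : (Option Bool) × List (Option Bool), g (p.1 :: p.2) := by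
        refine tsum_eq_tsum_of_ne_zero_bij (fun p => p.1.1 :: p.1.2) ?_ ?_ ?_
        · rintro ⟨⟨y1, w1⟩, _⟩ ⟨⟨y2, w2⟩, _⟩ h
          simp only [List.cons.injEq] at h
          exact Subtype.ext (by simp [h.1, h.2])
        · intro w hw
          match w with
          | [] => exact absurd h0 hw
          | y :: w' => exact ⟨⟨(y, w'), hw⟩, rfl⟩
        · intro x
          rfl
    _ = ∑' (y : Option Bool) (w : List (Option Bool)), g (y :: w) := ENNReal.tsum_prod'

private def Tn (M : Set Unit → List (Option Bool) → PMF (Option Bool)) (S : Set Unit)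
    (n : ℕ) (x : List (Option Bool)) (w : List (Option Bool)) : ℝ≥0∞ :=
  if pIsTerminal none w ∧ w.length ≤ n then pTraceProb M S x w else 0

private lemma Tn_le_one (M : Set Unit → List (Option Bool) → PMF (Option Bool)) (S : Set Unit) :
    ∀ (n : ℕ) (x : List (Option Bool)), ∑' w, Tn M S n x w ≤ 1 := by
  intro n
  induction n with
  | zero =>
    intro x
    have : ∀ w, Tn M S 0 x w = 0 := by
      intro w
      rw [Tn, if_neg]
      rintro ⟨ht, hlen⟩
      have : w = [] := List.length_eq_zero_iff.mp (Nat.le_zero.mp hlen)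
      subst this
      exact not_terminal_nil ht
    simp [this]
  | succ n ih =>
    intro x
    have h0 : Tn M S (n + 1) x [] = 0 := by
      rw [Tn, if_neg]
      rintro ⟨ht, _⟩
      exact not_terminal_nil ht
    rw [tsum_list_cons _ h0]
    have key : ∀ y : Option Bool, (∑' w, Tn M S (n + 1) x (y :: w)) ≤ M S x y := by
      intro y
      by_cases hy : y = none
      · subst hy
        have heq : ∀ w, Tn M S (n + 1) x (none :: w)
            = if w = [] then (M S x none : ℝ≥0∞) else 0 := by
          intro w
          by_cases hw : w = []
          · subst hw
            rw [if_pos rfl, Tn,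
              if_pos ⟨(terminal_single none).mpr rfl, by simp⟩]
            simp [pTraceProb]
          · rw [if_neg hw, Tn, if_neg]
            rintro ⟨ht, _⟩
            exact ((terminal_cons none w hw).mp ht).1 rfl
        calc (∑' w, Tn M S (n + 1) x (none :: w))
            = ∑' w, if w = [] then (M S x none : ℝ≥0∞) else 0 := tsum_congr heq
          _ = M S x none := by
              rw [tsum_eq_single ([] : List (Option Bool)) (fun w hw => if_neg hw)]
              simp
          _ ≤ M S x none := le_rfl
      · have heq : ∀ w, Tn M S (n + 1) x (y :: w)
            = M S x y * Tn M S n (x ++ [y]) w := by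
          intro w
          by_cases hw : w = []
          · subst hw
            rw [Tn, Tn, if_neg, if_neg, mul_zero]
            · rintro ⟨ht, _⟩
              exact not_terminal_nil ht
            · rintro ⟨ht, _⟩
              exact hy ((terminal_single y).mp ht)
          · by_cases hc : pIsTerminal none w ∧ w.length ≤ n
            · rw [Tn, Tn, if_pos ⟨(terminal_cons y w hw).mpr ⟨hy, hc.1⟩, by
                simp [Nat.succ_le_succ hc.2]⟩, if_pos hc]
              rfl
            · rw [Tn, Tn, if_neg, if_neg hc, mul_zero]
              rintro ⟨ht, hlen⟩
              refine hc ⟨((terminal_cons y w hw).mp ht).2, ?_⟩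
              simp only [List.length_cons] at hlen
              omega
        calc (∑' w, Tn M S (n + 1) x (y :: w))
            = ∑' w, M S x y * Tn M S n (x ++ [y]) w := tsum_congr heq
          _ = M S x y * ∑' w, Tn M S n (x ++ [y]) w := ENNReal.tsum_mul_left
          _ ≤ M S x y * 1 := mul_le_mul_right (ih (x ++ [y])) _
          _ = M S x y := mul_one _
    calc (∑' (y : Option Bool) (w : List (Option Bool)), Tn M S (n + 1) x (y :: w))
        ≤ ∑' (y : Option Bool), M S x y := ENNReal.tsum_le_tsum key
      _ = 1 := (M S x).tsum_coe

private lemma terminal_tsum_le_one (M : Set Unit → List (Option Bool) → PMF (Option Bool))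
    (S : Set Unit) (x : List (Option Bool)) :
    (∑' w, if pIsTerminal (none : Option Bool) w then pTraceProb M S x w else 0) ≤ 1 := by
  rw [ENNReal.tsum_eq_iSup_sum]
  refine iSup_le fun s => ?_
  calc (∑ w ∈ s, if pIsTerminal (none : Option Bool) w then pTraceProb M S x w else 0)
      ≤ ∑ w ∈ s, Tn M S (s.sup List.length) x w := by
        refine Finset.sum_le_sum fun w hw => ?_
        by_cases ht : pIsTerminal (none : Option Bool) w
        · rw [if_pos ht, Tn, if_pos ⟨ht, Finset.le_sup hw⟩]
        · rw [if_neg ht, Tn]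
          positivity
    _ ≤ ∑' w, Tn M S (s.sup List.length) x w := ENNReal.sum_le_tsum s
    _ ≤ 1 := Tn_le_one M S _ x

private lemma pRolloutProb_eq (M : Set Unit → List (Option Bool) → PMF (Option Bool))
    (S : Set Unit) (o : List (Option Bool)) :
    pRolloutProb none M S [] o
      = if pIsTerminal (none : Option Bool) o then pTraceProb M S [] o else 0 := by
  by_cases h : pIsTerminal (none : Option Bool) o
  · rw [if_pos h]
    unfold pRolloutProb
    rw [tsum_eq_single (⟨o, h, by simp⟩ :
      {w : List (Option Bool) // pIsTerminal none w ∧ [] ++ w = o})]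
    intro b hb
    exfalso
    apply hb
    apply Subtype.ext
    simpa using b.2.2
  · rw [if_neg h]
    unfold pRolloutProb
    have he : IsEmpty {w : List (Option Bool) // pIsTerminal none w ∧ [] ++ w = o} := by
      constructor
      rintro ⟨w, hw1, hw2⟩
      simp only [List.nil_append] at hw2
      exact h (hw2 ▸ hw1)
    exact tsum_empty

end Aux

/-- The total variation distance between the output distributions `G_z({s1}, λ)` and
`G_z(∅, λ)` of the rollout of `M_z` on the empty prompt is at most `2^{-ℓ}`: every event's
probabilities differ by at most `2^{-ℓ}`. -/
theorem stmt7 (ℓ : ℕ) (hℓ : 1 ≤ ℓ) (γ ε : ℝ) (hγ0 : 0 < γ) (hγ1 : γ < 1) (hε : 0 ≤ ε)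
    (z : List Bool) (hz : z.length = ℓ) :
    ∀ E : Set (List (Option Bool)),
      pRolloutK none (Mz ℓ γ ε z) {()} [] E ≤
          pRolloutK none (Mz ℓ γ ε z) ∅ [] E + ((1 : ℝ≥0∞) / 2) ^ ℓ ∧
      pRolloutK none (Mz ℓ γ ε z) ∅ [] E ≤
          pRolloutK none (Mz ℓ γ ε z) {()} [] E + ((1 : ℝ≥0∞) / 2) ^ ℓ := by
  intro E
  classical
  let F : Set Unit → List (Option Bool) → ℝ≥0∞ := fun S o =>
    if pIsTerminal (none : Option Bool) o then pTraceProb (Mz ℓ γ ε z) S [] o else 0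
  have hK : ∀ S : Set Unit, pRolloutK none (Mz ℓ γ ε z) S [] E
      = ∑' o, Set.indicator E (F S) o := by
    intro S
    calc pRolloutK none (Mz ℓ γ ε z) S [] E
        = ∑' o : E, pRolloutProb none (Mz ℓ γ ε z) S [] ↑o := rfl
      _ = ∑' o : E, F S ↑o := tsum_congr fun o => pRolloutProb_eq _ S ↑o
      _ = ∑' o, Set.indicator E (F S) o := tsum_subtype E (F S)
  have hFind : ∀ (S S' : Set Unit) (o : List (Option Bool)),
      ¬ (z.map some <+: o) → F S o = F S' o := by
    intro S S' o hpre
    show (if _ then _ else (0 : ℝ≥0∞)) = if _ then _ else 0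
    by_cases ht : pIsTerminal (none : Option Bool) o
    · rw [if_pos ht, if_pos ht]
      refine pTraceProb_indep ℓ γ ε z S S' o [] ?_
      intro p hp _
      simp only [List.nil_append]
      rintro rfl
      exact hpre hp
    · rw [if_neg ht, if_neg ht]
  have hpref : ∀ S : Set Unit,
      (∑' o, Set.indicator {o | z.map some <+: o} (F S) o) ≤ (1 / 2 : ℝ≥0∞) ^ ℓ := by
    intro S
    have hhalf : pTraceProb (Mz ℓ γ ε z) S [] (z.map some) = (1 / 2 : ℝ≥0∞) ^ ℓ := by
      have := pTraceProb_bits ℓ γ ε z hz S z [] (by simp)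
      simpa [hz] using this
    have hbij : (∑' o, Set.indicator {o | z.map some <+: o} (F S) o)
        = ∑' t : List (Option Bool),
            Set.indicator {o | z.map some <+: o} (F S) (z.map some ++ t) := by
      refine tsum_eq_tsum_of_ne_zero_bij (fun t => z.map some ++ t.1) ?_ ?_ ?_
      · rintro ⟨t1, _⟩ ⟨t2, _⟩ h
        exact Subtype.ext (List.append_cancel_left h)
      · intro o ho
        have hmem : z.map some <+: o := by
          by_contra hc
          exact ho (Set.indicator_of_notMem (s := {o | z.map some <+: o}) hc (F S))
        obtain ⟨t, rfl⟩ := hmem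
        exact ⟨⟨t, ho⟩, rfl⟩
      · intro t
        rfl
    have hval : ∀ t : List (Option Bool),
        Set.indicator {o | z.map some <+: o} (F S) (z.map some ++ t)
          = (1 / 2 : ℝ≥0∞) ^ ℓ *
            (if pIsTerminal (none : Option Bool) t then
              pTraceProb (Mz ℓ γ ε z) S (z.map some) t else 0) := by
      intro t
      rw [Set.indicator_of_mem
        (show (z.map some ++ t) ∈ {o | z.map some <+: o} from List.prefix_append _ _)]
      show (if pIsTerminal (none : Option Bool) (z.map some ++ t) then
          pTraceProb (Mz ℓ γ ε z) S [] (z.map some ++ t) else 0) = _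
      by_cases ht : pIsTerminal (none : Option Bool) t
      · rw [if_pos ((terminal_append z t).mpr ht), if_pos ht,
          pTraceProb_append (Mz ℓ γ ε z) S (z.map some) [] t, List.nil_append, hhalf]
      · rw [if_neg (fun hcon => ht ((terminal_append z t).mp hcon)), if_neg ht, mul_zero]
    calc (∑' o, Set.indicator {o | z.map some <+: o} (F S) o)
        = ∑' t : List (Option Bool),
            Set.indicator {o | z.map some <+: o} (F S) (z.map some ++ t) := hbij
      _ = ∑' t : List (Option Bool), (1 / 2 : ℝ≥0∞) ^ ℓ *
            (if pIsTerminal (none : Option Bool) t then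
              pTraceProb (Mz ℓ γ ε z) S (z.map some) t else 0) := tsum_congr hval
      _ = (1 / 2 : ℝ≥0∞) ^ ℓ * ∑' t : List (Option Bool),
            (if pIsTerminal (none : Option Bool) t then
              pTraceProb (Mz ℓ γ ε z) S (z.map some) t else 0) := ENNReal.tsum_mul_left
      _ ≤ (1 / 2 : ℝ≥0∞) ^ ℓ * 1 :=
          mul_le_mul_right (terminal_tsum_le_one (Mz ℓ γ ε z) S (z.map some)) _
      _ = (1 / 2 : ℝ≥0∞) ^ ℓ := mul_one _
  have main : ∀ S S' : Set Unit,
      (∑' o, Set.indicator E (F S) o)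
        ≤ (∑' o, Set.indicator E (F S') o) + (1 / 2 : ℝ≥0∞) ^ ℓ := by
    intro S S'
    have step1 : (∑' o, Set.indicator E (F S) o)
        ≤ ∑' o, (Set.indicator (E \ {o | z.map some <+: o}) (F S) o
            + Set.indicator {o | z.map some <+: o} (F S) o) := by
      refine ENNReal.tsum_le_tsum fun o => ?_
      by_cases h2 : o ∈ E
      · rw [Set.indicator_of_mem h2]
        by_cases h1 : o ∈ {o | z.map some <+: o}
        · rw [Set.indicator_of_mem h1]
          exact le_add_left le_rfl
        · rw [Set.indicator_of_mem
            (show o ∈ E \ {o | z.map some <+: o} from ⟨h2, h1⟩)]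
          exact le_add_right le_rfl
      · rw [Set.indicator_of_notMem h2]
        exact zero_le
    calc (∑' o, Set.indicator E (F S) o)
        ≤ ∑' o, (Set.indicator (E \ {o | z.map some <+: o}) (F S) o
            + Set.indicator {o | z.map some <+: o} (F S) o) := step1
      _ = (∑' o, Set.indicator (E \ {o | z.map some <+: o}) (F S) o)
            + ∑' o, Set.indicator {o | z.map some <+: o} (F S) o := ENNReal.tsum_add
      _ ≤ (∑' o, Set.indicator (E \ {o | z.map some <+: o}) (F S') o)
            + (1 / 2 : ℝ≥0∞) ^ ℓ := by
          refine add_le_add (le_of_eq (tsum_congr fun o => ?_)) (hpref S)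
          by_cases h : o ∈ E \ {o | z.map some <+: o}
          · rw [Set.indicator_of_mem h, Set.indicator_of_mem h]
            exact hFind S S' o h.2
          · rw [Set.indicator_of_notMem h, Set.indicator_of_notMem h]
      _ ≤ (∑' o, Set.indicator E (F S') o) + (1 / 2 : ℝ≥0∞) ^ ℓ := by
          refine add_le_add (ENNReal.tsum_le_tsum fun o => ?_) le_rfl
          by_cases h : o ∈ E \ {o | z.map some <+: o}
          · rw [Set.indicator_of_mem h, Set.indicator_of_mem h.1]
          · rw [Set.indicator_of_notMem h]
            exact zero_le
  constructor
  · rw [hK {()}, hK ∅]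
    exact main {()} ∅
  · rw [hK ∅, hK {()}]
    exact main ∅ {()}


end CCA
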